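/- Let Φ be a temporal CSP instance with ll-closed constraints over a finite set X. If Φ has a solution but has no injective solution, then there exist distinct variables x, y ∈ X such that every solution t of Φ satisfies t x = t y. -/

import Mathlib

/-- A constraint over a variable set `X`: a triple `(k, R, v)` of an arity, a temporal
relation `R ⊆ (Fin k → ℚ)` and a scope `v : Fin k → X`. -/
structure Constraint (X : Type*) where
  k : ℕ
  R : Set (Fin k → ℚ)
  scope : Fin k → X

/-- A temporal CSP instance is a finite family (list) of constraints; `t : X → ℚ` is a
solution if it satisfies every constraint. -/
def IsSolution {X : Type*} (Φ : List (Constraint X)) (t : X → ℚ) : Prop :=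
  ∀ c ∈ Φ, (fun i => t (c.scope i)) ∈ c.R

/-- The edge relation of the constraint graph `G_Φ`. -/
def Edge {X : Type*} (Φ : List (Constraint X)) (x y : X) : Prop :=
  ∃ c ∈ Φ, ∃ i j : Fin c.k, c.scope i = x ∧ c.scope j = y ∧
    ∀ s ∈ c.R, (∀ m, s i ≤ s m) → (∀ m, s j ≤ s m)

/-- A variable `y` is blocked in `Φ`. -/
def Blocked {X : Type*} (Φ : List (Constraint X)) (y : X) : Prop :=
  ∃ c ∈ Φ, ∃ i : Fin c.k, c.scope i = y ∧
    ¬ ∃ t : X → ℚ, ((fun i => t (c.scope i)) ∈ c.R ∧ ∀ m, t y ≤ t (c.scope m))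

/-- An ll operation on ℚ. -/
def IsLL (f : ℚ → ℚ → ℚ) : Prop :=
  ∀ a a' b b' : ℚ, f a b < f a' b' ↔
    ((a ≤ 0 ∧ a < a') ∨ (a = a' ∧ a ≤ 0 ∧ b < b') ∨ (0 < a ∧ 0 < a' ∧ b < b'))

/-- A relation `R ⊆ (Fin k → ℚ)` is preserved by `f : ℚ → ℚ → ℚ`. -/
def Preserves {k : ℕ} (f : ℚ → ℚ → ℚ) (R : Set (Fin k → ℚ)) : Prop :=
  ∀ s ∈ R, ∀ t ∈ R, (fun j => f (s j) (t j)) ∈ R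

/-- A relation is closed under all order-automorphisms of ℚ. -/
def AutoClosed {k : ℕ} (R : Set (Fin k → ℚ)) : Prop :=
  ∀ t ∈ R, ∀ α : ℚ → ℚ, StrictMono α → Function.Bijective α → (fun j => α (t j)) ∈ R

/-- An instance has ll-closed constraints. -/
def LLClosed {X : Type*} (Φ : List (Constraint X)) : Prop :=
  ∀ c ∈ Φ, AutoClosed c.R ∧ ∃ f : ℚ → ℚ → ℚ, IsLL f ∧ Preserves f c.R


noncomputable section

/-- Piecewise-linear map: identity below `c`, slope `r` above. -/
def pw (c r : ℚ) (x : ℚ) : ℚ := if x ≤ c then x else c + r * (x - c)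

lemma pw_strictMono {c r : ℚ} (hr : 0 < r) : StrictMono (pw c r) := by
  intro x y hxy
  unfold pw
  by_cases hx : x ≤ c <;> by_cases hy : y ≤ c
  · rw [if_pos hx, if_pos hy]; exact hxy
  · rw [if_pos hx, if_neg hy]; push_neg at hy; nlinarith
  · exact absurd (hxy.trans_le hy) (not_lt.2 (not_le.1 hx).le)
  · rw [if_neg hx, if_neg hy]; push_neg at hx hy; nlinarith

lemma pw_inv {c r : ℚ} (hr : 0 < r) (x : ℚ) : pw c r⁻¹ (pw c r x) = x := by
  unfold pw
  by_cases hx : x ≤ c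
  · simp [hx]
  · push_neg at hx
    have h1 : ¬ (c + r * (x - c) ≤ c) := by nlinarith
    rw [if_neg (not_le.2 hx), if_neg h1]
    have hr0 : r ≠ 0 := hr.ne'
    field_simp
    ring

lemma pw_bijective {c r : ℚ} (hr : 0 < r) : Function.Bijective (pw c r) := by
  have hr' : 0 < r⁻¹ := inv_pos.2 hr
  refine ⟨Function.LeftInverse.injective (g := pw c r⁻¹) (pw_inv hr), ?_⟩
  refine Function.RightInverse.surjective (g := pw c r⁻¹) ?_
  intro x
  have := pw_inv (c := c) hr' x
  simpa using this

/-- Any strictly increasing partial map on a finite set of rationals extends to an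
order automorphism of ℚ. -/
lemma extend_finset (A : Finset ℚ) : ∀ (h : ℚ → ℚ), (∀ a ∈ A, ∀ b ∈ A, a < b → h a < h b) →
    ∃ β : ℚ → ℚ, StrictMono β ∧ Function.Bijective β ∧ ∀ a ∈ A, β a = h a := by
  induction A using Finset.strongInduction with
  | _ A ih =>
    intro h hmono
    rcases A.eq_empty_or_nonempty with rfl | hA
    · exact ⟨id, strictMono_id, Function.bijective_id, by simp⟩
    set M := A.max' hA with hM
    have hMA : M ∈ A := A.max'_mem hA
    set A' := A.erase M with hA'
    have hss : A' ⊂ A := Finset.erase_ssubset hMA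
    obtain ⟨β', hm', hb', he'⟩ := ih A' hss h
      (fun a ha b hb => hmono a (Finset.mem_of_mem_erase ha) b (Finset.mem_of_mem_erase hb))
    rcases A'.eq_empty_or_nonempty with hA'e | hA'n
    · refine ⟨fun x => x + (h M - M), fun x y hxy => by dsimp; linarith,
        (Equiv.addRight (h M - M)).bijective, ?_⟩
      intro a ha
      have haM : a = M := by
        by_contra hne
        have : a ∈ A' := Finset.mem_erase.2 ⟨hne, ha⟩
        rw [hA'e] at this
        exact absurd this (Finset.notMem_empty a)
      subst haM; ring
    · set m := A'.max' hA'n with hm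
      have hmA' : m ∈ A' := A'.max'_mem hA'n
      have hmAmem : m ∈ A := Finset.mem_of_mem_erase hmA'
      have hmM : m < M := lt_of_le_of_ne (A.le_max' m hmAmem) (Finset.mem_erase.1 hmA').1
      have hβ'm : β' m = h m := he' m hmA'
      have hd : h m < β' M := by rw [← hβ'm]; exact hm' hmM
      have hd' : h m < h M := hmono m hmAmem M hMA hmM
      have hr : 0 < (h M - h m)/(β' M - h m) := div_pos (by linarith) (by linarith)
      refine ⟨pw (h m) ((h M - h m)/(β' M - h m)) ∘ β', (pw_strictMono hr).comp hm',
        ((pw_bijective hr).comp hb'), ?_⟩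
      intro a ha
      by_cases haM : a = M
      · subst haM
        show pw (h m) _ (β' M) = h M
        unfold pw
        rw [if_neg (not_le.2 hd)]
        rw [div_mul_cancel₀ _ (by linarith : β' M - h m ≠ 0)]
        ring
      · have ha' : a ∈ A' := Finset.mem_erase.2 ⟨haM, ha⟩
        have h1 : β' a = h a := he' a ha'
        have h2 : h a ≤ h m := by
          rcases eq_or_lt_of_le (A'.le_max' a ha') with he | hlt
          · rw [he]
          · exact (hmono a (Finset.mem_of_mem_erase ha') m hmAmem hlt).le
        show pw (h m) _ (β' a) = h a
        rw [h1]
        unfold pw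
        rw [if_pos h2]

/-- Two finite tuples with the same order type are related by an automorphism of ℚ. -/
lemma tuple_auto {k : ℕ} (v w : Fin k → ℚ) (hvw : ∀ i j, v i < v j ↔ w i < w j) :
    ∃ β : ℚ → ℚ, StrictMono β ∧ Function.Bijective β ∧ ∀ i, β (v i) = w i := by
  classical
  have heq : ∀ i j, v i = v j → w i = w j := by
    intro i j hij
    have h1 : ¬ w i < w j := fun hh =>
      absurd ((hvw i j).mpr hh) (by rw [hij]; exact lt_irrefl _)
    have h2 : ¬ w j < w i := fun hh =>
      absurd ((hvw j i).mpr hh) (by rw [hij]; exact lt_irrefl _)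
    exact le_antisymm (not_lt.1 h2) (not_lt.1 h1)
  set h : ℚ → ℚ := fun x => if hx : ∃ i, v i = x then w hx.choose else x with hh
  have hval : ∀ i, h (v i) = w i := by
    intro i
    have hx : ∃ j, v j = v i := ⟨i, rfl⟩
    simp only [hh, dif_pos hx]
    exact heq _ _ hx.choose_spec
  have hmono : ∀ a ∈ Finset.univ.image v, ∀ b ∈ Finset.univ.image v, a < b → h a < h b := by
    intro a ha b hb hab
    obtain ⟨i, _, rfl⟩ := Finset.mem_image.1 ha
    obtain ⟨j, _, rfl⟩ := Finset.mem_image.1 hb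
    rw [hval i, hval j]
    exact (hvw i j).1 hab
  obtain ⟨β, h1, h2, h3⟩ := extend_finset (Finset.univ.image v) h hmono
  exact ⟨β, h1, h2, fun i =>
    (h3 _ (Finset.mem_image_of_mem v (Finset.mem_univ i))).trans (hval i)⟩

end

/-- Lex-combination membership: if `u` has the lexicographic order type of `(s, t)`,
and `R` is auto-closed and preserved by an ll operation, then `u ∈ R`. -/
lemma lexMem {k : ℕ} {R : Set (Fin k → ℚ)} (hAuto : AutoClosed R)
    {f : ℚ → ℚ → ℚ} (hf : IsLL f) (hpres : Preserves f R) {s t u : Fin k → ℚ}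
    (hs : s ∈ R) (ht : t ∈ R)
    (hu : ∀ i j, u i < u j ↔ (s i < s j ∨ (s i = s j ∧ t i < t j))) : u ∈ R := by
  obtain ⟨M, hM⟩ := Finset.exists_le (Finset.univ.image s)
  have hM' : ∀ i, s i ≤ M := fun i => hM _ (Finset.mem_image_of_mem s (Finset.mem_univ i))
  have hmono : StrictMono (fun x : ℚ => x - M) := fun _ _ h => sub_lt_sub_right h M
  have hbij : Function.Bijective (fun x : ℚ => x - M) := (Equiv.subRight M).bijective
  have hs' : (fun j => s j - M) ∈ R := hAuto s hs _ hmono hbij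
  have hr : (fun j => f (s j - M) (t j)) ∈ R := hpres _ hs' t ht
  have horder : ∀ i j, f (s i - M) (t i) < f (s j - M) (t j) ↔ u i < u j := by
    intro i j
    have h0i : s i - M ≤ 0 := by have := hM' i; linarith
    have e1 : s i - M < s j - M ↔ s i < s j := sub_lt_sub_iff_right M
    have e2 : s i - M = s j - M ↔ s i = s j := sub_left_inj
    rw [hf, hu]
    constructor
    · rintro (⟨_, h⟩ | ⟨h1, _, h2⟩ | ⟨h, _, _⟩)
      · exact Or.inl (e1.mp h)
      · exact Or.inr ⟨e2.mp h1, h2⟩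
      · exact absurd h (not_lt.2 h0i)
    · rintro (h | ⟨h1, h2⟩)
      · exact Or.inl ⟨h0i, e1.mpr h⟩
      · exact Or.inr (Or.inl ⟨e2.mpr h1, h0i, h2⟩)
  obtain ⟨β, hβm, hβb, hβ⟩ := tuple_auto (fun j => f (s j - M) (t j)) u horder
  have hmem := hAuto _ hr β hβm hβb
  have : (fun j => β (f (s j - M) (t j))) = u := funext hβ
  rwa [this] at hmem

/-- The lex combination of two solutions is a solution. -/
lemma lexSolution {X : Type*} {Φ : List (Constraint X)} (hΦ : LLClosed Φ)
    {s t u : X → ℚ} (hs : IsSolution Φ s) (ht : IsSolution Φ t)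
    (hu : ∀ x y, u x < u y ↔ (s x < s y ∨ (s x = s y ∧ t x < t y))) :
    IsSolution Φ u := by
  intro c hc
  obtain ⟨hauto, f, hf, hpres⟩ := hΦ c hc
  exact lexMem hauto hf hpres (hs c hc) (ht c hc)
    (fun i j => hu (c.scope i) (c.scope j))

/-- Realizing the lex order of a pair of finite tuples by a single rational tuple. -/
lemma exists_lex {X : Type*} [Fintype X] (s t : X → ℚ) :
    ∃ u : X → ℚ, ∀ x y, u x < u y ↔ (s x < s y ∨ (s x = s y ∧ t x < t y)) := by
  classical
  obtain ⟨T0, hT0⟩ := Finset.exists_le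
    ((Finset.univ ×ˢ Finset.univ).image fun p : X × X => |t p.1 - t p.2|)
  have hT : ∀ x y : X, |t x - t y| ≤ T0 := fun x y =>
    hT0 _ (Finset.mem_image.2 ⟨(x, y), by simp⟩)
  set T : ℚ := max T0 0 with hTdef
  have hT' : ∀ x y : X, |t x - t y| ≤ T := fun x y => (hT x y).trans (le_max_left _ _)
  obtain ⟨g, hg0, hg⟩ : ∃ g : ℚ, 0 < g ∧ ∀ x y : X, s x < s y → g ≤ s y - s x := by
    set Q := ((Finset.univ ×ˢ Finset.univ).filter fun p : X × X => s p.1 < s p.2).image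
      (fun p : X × X => s p.2 - s p.1) with hQdef
    rcases Q.eq_empty_or_nonempty with hQe | hQn
    · refine ⟨1, one_pos, fun x y h => ?_⟩
      exfalso
      have : (s y - s x) ∈ Q := Finset.mem_image.2
        ⟨(x, y), Finset.mem_filter.2 ⟨by simp, h⟩, rfl⟩
      rw [hQe] at this
      exact absurd this (Finset.notMem_empty _)
    · refine ⟨Q.min' hQn, ?_, fun x y h => ?_⟩
      · have := Q.min'_mem hQn
        obtain ⟨p, hp, he⟩ := Finset.mem_image.1 this
        have := (Finset.mem_filter.1 hp).2
        rw [← he]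
        linarith
      · exact Q.min'_le _ (Finset.mem_image.2
          ⟨(x, y), Finset.mem_filter.2 ⟨by simp, h⟩, rfl⟩)
  set δ : ℚ := g / (T + 1) with hδdef
  have hT1 : (0:ℚ) < T + 1 := by
    have : (0:ℚ) ≤ T := le_max_right _ _
    linarith
  have hδ : 0 < δ := div_pos hg0 hT1
  have key : ∀ x y : X, δ * |t x - t y| < g := by
    intro x y
    have h1 : |t x - t y| ≤ T := hT' x y
    have h2 : δ * |t x - t y| ≤ δ * T := mul_le_mul_of_nonneg_left h1 hδ.le
    have h3 : δ * T < g := by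
      rw [hδdef, div_mul_eq_mul_div, div_lt_iff₀ hT1]
      nlinarith
    linarith
  refine ⟨fun x => s x + δ * t x, fun x y => ?_⟩
  rcases lt_trichotomy (s x) (s y) with h | h | h
  · refine iff_of_true ?_ (Or.inl h)
    have h1 := key x y
    have h2 := hg x y h
    have h3 : δ * (t x - t y) ≤ δ * |t x - t y| :=
      mul_le_mul_of_nonneg_left (le_abs_self _) hδ.le
    show s x + δ * t x < s y + δ * t y
    nlinarith
  · have e : (s x + δ * t x < s y + δ * t y) ↔ t x < t y := by
      rw [h]
      constructor <;> intro hh <;> nlinarith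
    rw [e]
    simp [h]
  · refine iff_of_false ?_ ?_
    · have h1 := key y x
      have h2 := hg y x h
      have h3 : δ * (t y - t x) ≤ δ * |t y - t x| :=
        mul_le_mul_of_nonneg_left (le_abs_self _) hδ.le
      dsimp only
      intro hh
      nlinarith
    · rintro (h' | ⟨h', _⟩) <;> [linarith; exact absurd h' (ne_of_gt h)]

/-- If an instance with ll-closed constraints has a solution but no injective solution,
then some two distinct variables are equal in all solutions. -/
theorem exists_forced_equality {X : Type*} [Fintype X]
    (Φ : List (Constraint X)) (hΦ : LLClosed Φ)
    (hsol : ∃ t : X → ℚ, IsSolution Φ t)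
    (hninj : ¬ ∃ t : X → ℚ, Function.Injective t ∧ IsSolution Φ t) :
    ∃ x y : X, x ≠ y ∧ ∀ t : X → ℚ, IsSolution Φ t → t x = t y := by
  classical
  by_contra hcon
  push_neg at hcon
  obtain ⟨s₀, hs₀⟩ := hsol
  have step : ∀ L : List (X × X), (∀ p ∈ L, p.1 ≠ p.2) →
      ∃ u, IsSolution Φ u ∧ ∀ p ∈ L, u p.1 ≠ u p.2 := by
    intro L
    induction L with
    | nil => exact fun _ => ⟨s₀, hs₀, by simp⟩
    | cons p L ih =>
      intro hL
      obtain ⟨u', hu', hsep⟩ := ih (fun q hq => hL q (List.mem_cons_of_mem _ hq))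
      obtain ⟨tp, htp, htpne⟩ := hcon p.1 p.2 (hL p List.mem_cons_self)
      obtain ⟨u, hu⟩ := exists_lex u' tp
      have husol := lexSolution hΦ hu' htp hu
      have hcontra : ∀ x y : X, u x = u y → u' x = u' y ∧ tp x = tp y := by
        intro x y heq
        have h1 : ¬ (u' x < u' y ∨ (u' x = u' y ∧ tp x < tp y)) := fun rhs =>
          (ne_of_lt ((hu x y).mpr rhs)) heq
        have h2 : ¬ (u' y < u' x ∨ (u' y = u' x ∧ tp y < tp x)) := fun rhs =>
          (ne_of_lt ((hu y x).mpr rhs)) heq.symm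
        have hA : ¬ u' x < u' y := fun hh => h1 (Or.inl hh)
        have hB : ¬ u' y < u' x := fun hh => h2 (Or.inl hh)
        have e : u' x = u' y := le_antisymm (not_lt.1 hB) (not_lt.1 hA)
        have hC : ¬ tp x < tp y := fun hh => h1 (Or.inr ⟨e, hh⟩)
        have hD : ¬ tp y < tp x := fun hh => h2 (Or.inr ⟨e.symm, hh⟩)
        exact ⟨e, le_antisymm (not_lt.1 hD) (not_lt.1 hC)⟩
      refine ⟨u, husol, ?_⟩
      intro q hq
      rcases List.mem_cons.1 hq with rfl | hq'
      · exact fun heq => htpne (hcontra _ _ heq).2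
      · exact fun heq => hsep q hq' (hcontra _ _ heq).1
  set L := ((Finset.univ ×ˢ Finset.univ).filter fun p : X × X => p.1 ≠ p.2).toList with hLdef
  obtain ⟨u, husol, hsep⟩ := step L
    (fun p hp => (Finset.mem_filter.1 (Finset.mem_toList.1 hp)).2)
  refine hninj ⟨u, ?_, husol⟩
  intro x y hxy
  by_contra hne
  exact hsep (x, y) (Finset.mem_toList.2 (Finset.mem_filter.2 ⟨by simp, hne⟩)) hxy
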